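/- For tripartite pure stabilizer states (locally equivalent to a tensor product of e_{AB}, e_{BC}, e_{AC} Bell pairs, g_{ABC} GHZ states, and unentangled qubits), the average number of Bell pairs between A and B satisfies ē_{AB} log 2 = (1/2)(S̄_A + S̄_B − S̄_C − ḡ(A:B)) ≥ 0, and if S̄_X ≥ log D_{X,min} − D_{X,min}/D_{X,max} for each marginal with N_C/N > 1/2, then ḡ(A:B) ≤ D_{AB}/D_C and ē_{AB} ≤ D_{AB}/D_C. -/

import Mathlib

open MeasureTheory

lemma integ_of_nat_bdd {Ω : Type*} [MeasurableSpace Ω] (μ : Measure Ω)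
    [IsProbabilityMeasure μ] {f : Ω → ℕ} (hf : Measurable f) (C : ℕ)
    (hb : ∀ ω, f ω ≤ C) : Integrable (fun ω => (f ω : ℝ)) μ := by
  refine (integrable_const (C : ℝ)).mono' ?_ ?_
  · exact Measurable.aestronglyMeasurable (by fun_prop)
  · filter_upwards with ω
    rw [Real.norm_eq_abs, abs_of_nonneg (by positivity)]
    exact_mod_cast hb ω

/-- For tripartite pure stabilizer states — locally equivalent to
`e_AB, e_BC, e_AC` Bell pairs, `g_ABC` GHZ states and unentangled qubits, so that
`S(A) = (e_AB + e_AC + g_ABC) log 2` (and cyclically) and `g(A:B) = g_ABC log 2` — the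
ensemble averages satisfy `ē_AB log 2 = (1/2)(S̄_A + S̄_B − S̄_C − ḡ(A:B)) ≥ 0`, and if
moreover `S̄_X ≥ log D_{X,min} − D_{X,min}/D_{X,max}` for each marginal and
`N_C/N > 1/2`, then `ḡ(A:B) ≤ D_{AB}/D_C` and `ē_AB ≤ D_{AB}/D_C`. -/
theorem stabilizer_bell_pair_average {Ω : Type*} [MeasurableSpace Ω]
    (μ : Measure Ω) [IsProbabilityMeasure μ]
    (eAB eBC eAC gABC sA sB sC : Ω → ℕ)
    (hmAB : Measurable eAB) (hmBC : Measurable eBC) (hmAC : Measurable eAC)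
    (hmg : Measurable gABC)
    (NA NB NC : ℕ)
    (hA : ∀ ω, eAB ω + eAC ω + gABC ω + sA ω = NA)
    (hB : ∀ ω, eAB ω + eBC ω + gABC ω + sB ω = NB)
    (hC : ∀ ω, eAC ω + eBC ω + gABC ω + sC ω = NC)
    (hNC : NA + NB < NC)
    (hSA : Real.log (min ((2:ℝ)^NA) ((2:ℝ)^(NB+NC)))
        - min ((2:ℝ)^NA) ((2:ℝ)^(NB+NC)) / max ((2:ℝ)^NA) ((2:ℝ)^(NB+NC))
      ≤ (∫ ω, ((eAB ω + eAC ω + gABC ω : ℕ) : ℝ) ∂μ) * Real.log 2)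
    (hSB : Real.log (min ((2:ℝ)^NB) ((2:ℝ)^(NA+NC)))
        - min ((2:ℝ)^NB) ((2:ℝ)^(NA+NC)) / max ((2:ℝ)^NB) ((2:ℝ)^(NA+NC))
      ≤ (∫ ω, ((eAB ω + eBC ω + gABC ω : ℕ) : ℝ) ∂μ) * Real.log 2)
    (hSC : Real.log (min ((2:ℝ)^NC) ((2:ℝ)^(NA+NB)))
        - min ((2:ℝ)^NC) ((2:ℝ)^(NA+NB)) / max ((2:ℝ)^NC) ((2:ℝ)^(NA+NB))
      ≤ (∫ ω, ((eAC ω + eBC ω + gABC ω : ℕ) : ℝ) ∂μ) * Real.log 2) :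
    ((∫ ω, (eAB ω : ℝ) ∂μ) * Real.log 2
        = (1/2) * ((∫ ω, ((eAB ω + eAC ω + gABC ω : ℕ) : ℝ) ∂μ) * Real.log 2
            + (∫ ω, ((eAB ω + eBC ω + gABC ω : ℕ) : ℝ) ∂μ) * Real.log 2
            - (∫ ω, ((eAC ω + eBC ω + gABC ω : ℕ) : ℝ) ∂μ) * Real.log 2
            - (∫ ω, (gABC ω : ℝ) ∂μ) * Real.log 2)) ∧
      0 ≤ (∫ ω, (eAB ω : ℝ) ∂μ) * Real.log 2 ∧
      (∫ ω, (gABC ω : ℝ) ∂μ) * Real.log 2 ≤ (2:ℝ)^(NA+NB) / (2:ℝ)^NC ∧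
      (∫ ω, (eAB ω : ℝ) ∂μ) ≤ (2:ℝ)^(NA+NB) / (2:ℝ)^NC := by
  have L0 : (0:ℝ) < Real.log 2 := Real.log_pos (by norm_num)
  -- pointwise bounds
  have bAB : ∀ ω, eAB ω ≤ NA := fun ω => le_trans (by omega) (hA ω).le
  have bAC : ∀ ω, eAC ω ≤ NA := fun ω => le_trans (by omega) (hA ω).le
  have bBC : ∀ ω, eBC ω ≤ NB := fun ω => le_trans (by omega) (hB ω).le
  have bg : ∀ ω, gABC ω ≤ NA := fun ω => le_trans (by omega) (hA ω).le
  have iAB := integ_of_nat_bdd μ hmAB NA bAB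
  have iAC := integ_of_nat_bdd μ hmAC NA bAC
  have iBC := integ_of_nat_bdd μ hmBC NB bBC
  have ig := integ_of_nat_bdd μ hmg NA bg
  -- split the integrals of sums
  have iACg : Integrable (fun ω => (eAC ω:ℝ) + (gABC ω:ℝ)) μ := iAC.add ig
  have iBCg : Integrable (fun ω => (eBC ω:ℝ) + (gABC ω:ℝ)) μ := iBC.add ig
  have iSA : Integrable (fun ω => ((eAB ω + eAC ω + gABC ω : ℕ):ℝ)) μ := by
    have h : Integrable (fun ω => (eAB ω:ℝ) + (eAC ω:ℝ) + (gABC ω:ℝ)) μ :=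
      (iAB.add iAC).add ig
    exact h.congr (by filter_upwards with ω; push_cast; ring)
  have iSB : Integrable (fun ω => ((eAB ω + eBC ω + gABC ω : ℕ):ℝ)) μ := by
    have h : Integrable (fun ω => (eAB ω:ℝ) + (eBC ω:ℝ) + (gABC ω:ℝ)) μ :=
      (iAB.add iBC).add ig
    exact h.congr (by filter_upwards with ω; push_cast; ring)
  have splitA : (∫ ω, ((eAB ω + eAC ω + gABC ω : ℕ) : ℝ) ∂μ)
      = (∫ ω, (eAB ω : ℝ) ∂μ) + (∫ ω, (eAC ω : ℝ) ∂μ) + (∫ ω, (gABC ω : ℝ) ∂μ) := by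
    rw [integral_congr_ae (g := fun ω => (eAB ω:ℝ) + ((eAC ω:ℝ) + (gABC ω:ℝ)))
      (by filter_upwards with ω; push_cast; ring),
      integral_add iAB iACg, integral_add iAC ig]; ring
  have splitB : (∫ ω, ((eAB ω + eBC ω + gABC ω : ℕ) : ℝ) ∂μ)
      = (∫ ω, (eAB ω : ℝ) ∂μ) + (∫ ω, (eBC ω : ℝ) ∂μ) + (∫ ω, (gABC ω : ℝ) ∂μ) := by
    rw [integral_congr_ae (g := fun ω => (eAB ω:ℝ) + ((eBC ω:ℝ) + (gABC ω:ℝ)))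
      (by filter_upwards with ω; push_cast; ring),
      integral_add iAB iBCg, integral_add iBC ig]; ring
  have splitC : (∫ ω, ((eAC ω + eBC ω + gABC ω : ℕ) : ℝ) ∂μ)
      = (∫ ω, (eAC ω : ℝ) ∂μ) + (∫ ω, (eBC ω : ℝ) ∂μ) + (∫ ω, (gABC ω : ℝ) ∂μ) := by
    rw [integral_congr_ae (g := fun ω => (eAC ω:ℝ) + ((eBC ω:ℝ) + (gABC ω:ℝ)))
      (by filter_upwards with ω; push_cast; ring),
      integral_add iAC iBCg, integral_add iBC ig]; ring
  set IAB := ∫ ω, (eAB ω : ℝ) ∂μ with hIAB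
  set IAC := ∫ ω, (eAC ω : ℝ) ∂μ
  set IBC := ∫ ω, (eBC ω : ℝ) ∂μ
  set Ig := ∫ ω, (gABC ω : ℝ) ∂μ
  have nnAB : 0 ≤ IAB := integral_nonneg fun ω => by positivity
  have nnAC : 0 ≤ IAC := integral_nonneg fun ω => by positivity
  have nnBC : 0 ≤ IBC := integral_nonneg fun ω => by positivity
  have nng : 0 ≤ Ig := integral_nonneg fun ω => by positivity
  -- upper bounds on integrals by pointwise bound
  have uA : IAB + IAC + Ig ≤ (NA : ℝ) := by
    rw [← splitA]
    calc (∫ ω, ((eAB ω + eAC ω + gABC ω : ℕ) : ℝ) ∂μ)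
        ≤ ∫ _, (NA : ℝ) ∂μ := by
          refine integral_mono ?_ (integrable_const _) fun ω => ?_
          · exact iSA
          · exact Nat.cast_le.mpr (le_trans (by omega) (hA ω).le : eAB ω + eAC ω + gABC ω ≤ NA)
      _ = (NA : ℝ) := by simp
  have uB : IAB + IBC + Ig ≤ (NB : ℝ) := by
    rw [← splitB]
    calc (∫ ω, ((eAB ω + eBC ω + gABC ω : ℕ) : ℝ) ∂μ)
        ≤ ∫ _, (NB : ℝ) ∂μ := by
          refine integral_mono ?_ (integrable_const _) fun ω => ?_
          · exact iSB
          · exact Nat.cast_le.mpr (le_trans (by omega) (hB ω).le : eAB ω + eBC ω + gABC ω ≤ NB)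
      _ = (NB : ℝ) := by simp
  -- simplify hSC
  have hpow : (2:ℝ)^(NA+NB) < (2:ℝ)^NC := by
    exact pow_lt_pow_right₀ (by norm_num) hNC
  have hmin : min ((2:ℝ)^NC) ((2:ℝ)^(NA+NB)) = (2:ℝ)^(NA+NB) := min_eq_right hpow.le
  have hmax : max ((2:ℝ)^NC) ((2:ℝ)^(NA+NB)) = (2:ℝ)^NC := max_eq_left hpow.le
  rw [hmin, hmax, splitC] at hSC
  have hlog : Real.log ((2:ℝ)^(NA+NB)) = ((NA:ℝ)+NB) * Real.log 2 := by
    rw [Real.log_pow]; push_cast; ring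
  rw [hlog] at hSC
  set D := (2:ℝ)^(NA+NB) / (2:ℝ)^NC with hD
  -- key inequality: 2*IAB*log2 + Ig*log2 ≤ D
  have key : 2 * IAB * Real.log 2 + Ig * Real.log 2 ≤ D := by
    have h1 : (IAB + IAC + Ig) * Real.log 2 ≤ (NA:ℝ) * Real.log 2 :=
      mul_le_mul_of_nonneg_right uA L0.le
    have h2 : (IAB + IBC + Ig) * Real.log 2 ≤ (NB:ℝ) * Real.log 2 :=
      mul_le_mul_of_nonneg_right uB L0.le
    nlinarith [hSC]
  refine ⟨?_, ?_, ?_, ?_⟩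
  · rw [splitA, splitB, splitC]; ring
  · positivity
  · nlinarith
  · have h2L : (1:ℝ) ≤ 2 * Real.log 2 := by
      have := Real.log_two_gt_d9; linarith
    have : IAB * 1 ≤ IAB * (2 * Real.log 2) := by
      exact mul_le_mul_of_nonneg_left h2L nnAB
    nlinarith
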